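/- Let α > -1, let n ≥ 1 be an integer, let φ : 𝔻 → 𝔻 be analytic, and let ψ be analytic on 𝔻 and not identically zero. Suppose that for all z, w ∈ 𝔻, p·z^n·conj(ψ(w)) / (1 - z·conj(φ(w)))^{n+α+2} = p·conj(w)^n·ψ(z) / (1 - conj(w)·φ(z))^{n+α+2}. Then, with b = φ(0) ∈ 𝔻, there exist real numbers a, c ∈ ℝ such that for all z ∈ 𝔻, ψ(z) = a·z^n / (1 - conj(b)·z)^{n+α+2} and φ(z) = b + cz/(1 - conj(b)·z). -/

import Mathlib

open ComplexConjugate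

namespace Stmt9Aux
open Complex Filter Topology Set

lemma mem_B {z : ℂ} : z ∈ Metric.ball (0 : ℂ) 1 ↔ ‖z‖ < 1 := by
  simp [Metric.mem_ball, Complex.dist_eq]
lemma rhp_re {z u : ℂ} (hz : ‖z‖ < 1) (hu : ‖u‖ < 1) :
    0 < (1 - z * u).re := by
  have h1 : (z * u).re ≤ ‖z * u‖ := Complex.re_le_norm _
  have h2 : ‖z * u‖ < 1 := by
    rw [norm_mul]; nlinarith [norm_nonneg z, norm_nonneg u]
  simp only [Complex.sub_re, Complex.one_re]; linarith
lemma rhp_ne {x : ℂ} (h : 0 < x.re) : x ≠ 0 := fun h0 => by simp [h0] at h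
lemma cpow_ne_zero' {x y : ℂ} (hx : x ≠ 0) : x ^ y ≠ 0 := by
  rw [Complex.cpow_def_of_ne_zero hx]; exact Complex.exp_ne_zero _
lemma rhp_slit {x : ℂ} (h : 0 < x.re) : x ∈ Complex.slitPlane :=
  Complex.mem_slitPlane_iff.mpr (Or.inl h)
lemma rhp_arg {x : ℂ} (h : 0 < x.re) : x.arg ≠ Real.pi := by
  intro hpi
  rw [Complex.arg_eq_pi_iff] at hpi
  linarith [hpi.1]
lemma conj_cpow_real {x : ℂ} (hx : 0 < x.re) (r : ℝ) :
    conj (x ^ (r : ℂ)) = (conj x) ^ (r : ℂ) := by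
  have hx0 : x ≠ 0 := rhp_ne hx
  have hxc : (conj x) ≠ 0 := by simpa using hx0
  rw [Complex.cpow_def_of_ne_zero hx0, Complex.cpow_def_of_ne_zero hxc,
    ← Complex.exp_conj, map_mul, Complex.log_conj _ (rhp_arg hx), Complex.conj_ofReal]
lemma contA_cpow {f : ℝ → ℂ} {x : ℝ} (hf : ContinuousAt f x) (h : 0 < (f x).re) (r : ℝ) :
    ContinuousAt (fun t => (f t) ^ ((r : ℝ) : ℂ)) x :=
  hf.cpow continuousAt_const (rhp_slit h)

lemma im_int_mul {k : ℤ} : ((k : ℂ) * (2 * (Real.pi : ℝ) * Complex.I)).im = 2 * Real.pi * k := by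
  simp [Complex.mul_im]
  ring

lemma strip {X : Type*} [TopologicalSpace X] {S : Set X} (hS : IsPreconnected S)
    {F : X → ℂ} (hF : ContinuousOn F S)
    (hexp : ∀ x ∈ S, Complex.exp (F x) = 1)
    {x₀ x : X} (hx₀ : x₀ ∈ S) (hx : x ∈ S) : F x = F x₀ := by
  have hk : ∀ y ∈ S, ∃ k : ℤ, F y = (k : ℂ) * (2 * (Real.pi : ℝ) * Complex.I) := by
    intro y hy
    have := (Complex.exp_eq_one_iff).mp (hexp y hy)
    simpa using this
  obtain ⟨k, hkx⟩ := hk x hx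
  obtain ⟨k₀, hkx₀⟩ := hk x₀ hx₀
  suffices h : k = k₀ by rw [hkx, hkx₀, h]
  by_contra hne
  have hcont : ContinuousOn (fun y => (F y).im) S := Complex.continuous_im.comp_continuousOn hF
  have hpi : (0 : ℝ) < Real.pi := Real.pi_pos
  have main : ∀ (y₁ y₂ : X), y₁ ∈ S → y₂ ∈ S → ∀ m₁ m₂ : ℤ,
      (F y₁).im = 2 * Real.pi * m₁ → (F y₂).im = 2 * Real.pi * m₂ → m₁ < m₂ → False := by
    intro y₁ y₂ hy₁ hy₂ m₁ m₂ h1 h2 hlt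
    have hmem : (2 * Real.pi * m₁ + Real.pi) ∈ Set.Icc ((F y₁).im) ((F y₂).im) := by
      constructor
      · rw [h1]; linarith
      · rw [h2]
        have : (m₁ : ℝ) + 1 ≤ m₂ := by exact_mod_cast hlt
        nlinarith
    obtain ⟨y, hyS, hyv⟩ := hS.intermediate_value hy₁ hy₂ hcont hmem
    obtain ⟨m, hm⟩ := hk y hyS
    have hyv' : (F y).im = 2 * Real.pi * m₁ + Real.pi := hyv
    have : 2 * Real.pi * (m : ℝ) = 2 * Real.pi * m₁ + Real.pi := by
      rw [← hyv', hm, im_int_mul]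
    have h2m : (2 * m : ℝ) = 2 * m₁ + 1 := by
      field_simp at this
      nlinarith [this]
    have : (2 * m : ℤ) = 2 * m₁ + 1 := by exact_mod_cast h2m
    omega
  have hix : (F x).im = 2 * Real.pi * k := by rw [hkx, im_int_mul]
  have hix₀ : (F x₀).im = 2 * Real.pi * k₀ := by rw [hkx₀, im_int_mul]
  rcases lt_or_gt_of_ne hne with hlt | hlt
  · exact main x x₀ hx hx₀ k k₀ hix hix₀ hlt
  · exact main x₀ x hx₀ hx k₀ k hix₀ hix hlt

lemma preconn_pball : IsPreconnected (Metric.ball (0 : ℂ) 1 \ {0}) := by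
  have himg : Metric.ball (0 : ℂ) 1 \ {0}
      = (fun p : ℝ × ℝ => (p.1 : ℂ) * Complex.exp ((p.2 : ℂ) * Complex.I)) ''
        (Set.Ioo (0 : ℝ) 1 ×ˢ (Set.univ : Set ℝ)) := by
    ext z
    constructor
    · rintro ⟨hzB, hz0⟩
      have hz0' : z ≠ 0 := by simpa using hz0
      refine ⟨⟨‖z‖, Complex.arg z⟩, ⟨⟨?_, ?_⟩, trivial⟩, ?_⟩
      · exact norm_pos_iff.mpr hz0'
      · exact mem_B.mp hzB
      · exact Complex.norm_mul_exp_arg_mul_I z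
    · rintro ⟨⟨r, θ⟩, ⟨⟨hr0, hr1⟩, -⟩, rfl⟩
      constructor
      · rw [mem_B, norm_mul, Complex.norm_real, Real.norm_eq_abs, Complex.norm_exp_ofReal_mul_I,
          abs_of_pos hr0]
        simpa using hr1
      · simp only [Set.mem_singleton_iff, mul_eq_zero, not_or]
        constructor
        · exact_mod_cast hr0.ne'
        · exact Complex.exp_ne_zero _
  rw [himg]
  apply IsPreconnected.image
  · exact (isPreconnected_Ioo).prod isPreconnected_univ
  · apply Continuous.continuousOn
    continuity

end Stmt9Aux

open Complex Filter Topology Set Stmt9Aux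

/-- Theorem 2.4 (forward direction): if the reproducing-kernel identity for
Hermitianness of `D_{n,ψ,φ}` holds on `A²_α`, then `ψ` and `φ` have the stated
forms with real parameters `a, c`. -/
theorem stmt9 (α : ℝ) (hα : -1 < α) (n : ℕ) (hn : 1 ≤ n)
    (φ ψ : ℂ → ℂ)
    (hφ : DifferentiableOn ℂ φ (Metric.ball (0 : ℂ) 1))
    (hφmap : ∀ z ∈ Metric.ball (0 : ℂ) 1, φ z ∈ Metric.ball (0 : ℂ) 1)
    (hψ : DifferentiableOn ℂ ψ (Metric.ball (0 : ℂ) 1))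
    (hψne : ∃ z ∈ Metric.ball (0 : ℂ) 1, ψ z ≠ 0)
    (p : ℂ) (hp : p = ∏ j ∈ Finset.range n, ((α : ℂ) + 2 + j))
    (heq : ∀ z ∈ Metric.ball (0 : ℂ) 1, ∀ w ∈ Metric.ball (0 : ℂ) 1,
      p * z ^ n * conj (ψ w) / (1 - z * conj (φ w)) ^ ((n : ℂ) + α + 2)
        = p * (conj w) ^ n * ψ z / (1 - conj w * φ z) ^ ((n : ℂ) + α + 2)) :
    ∃ a c : ℝ, ∀ z ∈ Metric.ball (0 : ℂ) 1,
      ψ z = (a : ℂ) * z ^ n / (1 - conj (φ 0) * z) ^ ((n : ℂ) + α + 2) ∧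
      φ z = φ 0 + (c : ℂ) * z / (1 - conj (φ 0) * z) := by
  obtain ⟨w₀, hw₀B, hψw₀⟩ := hψne
  have h0B : (0 : ℂ) ∈ Metric.ball (0 : ℂ) 1 := by rw [mem_B]; simp
  have hbB : φ 0 ∈ Metric.ball (0 : ℂ) 1 := hφmap 0 h0B
  have habs : ∀ z ∈ Metric.ball (0 : ℂ) 1, ‖z‖ < 1 := fun z hz => mem_B.mp hz
  have hφabs : ∀ z ∈ Metric.ball (0 : ℂ) 1, ‖φ z‖ < 1 :=
    fun z hz => habs _ (hφmap z hz)
  set sR : ℝ := (n : ℝ) + α + 2 with hsRdef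
  have hn1 : (1 : ℝ) ≤ (n : ℝ) := by exact_mod_cast hn
  have hsR1 : (1 : ℝ) < sR := by rw [hsRdef]; linarith
  have hsC : ((n : ℂ) + (α : ℂ) + 2) = ((sR : ℝ) : ℂ) := by rw [hsRdef]; push_cast; ring
  have hre1 : ∀ z ∈ Metric.ball (0 : ℂ) 1, ∀ w ∈ Metric.ball (0 : ℂ) 1,
      0 < (1 - z * conj (φ w)).re := by
    intro z hz w hw
    exact rhp_re (habs z hz) (by rw [Complex.norm_conj]; exact hφabs w hw)
  have hre2 : ∀ z ∈ Metric.ball (0 : ℂ) 1, ∀ w ∈ Metric.ball (0 : ℂ) 1,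
      0 < (1 - conj w * φ z).re := by
    intro z hz w hw
    exact rhp_re (by rw [Complex.norm_conj]; exact habs w hw) (hφabs z hz)
  have hpne : p ≠ 0 := by
    rw [hp]
    apply Finset.prod_ne_zero_iff.mpr
    intro j hj
    apply rhp_ne
    have hre : ((α : ℂ) + 2 + (j : ℕ)).re = α + 2 + j := by simp
    rw [hre]
    have : (0 : ℝ) ≤ (j : ℝ) := Nat.cast_nonneg j
    linarith
  have star : ∀ z ∈ Metric.ball (0 : ℂ) 1, ∀ w ∈ Metric.ball (0 : ℂ) 1,
      z ^ n * conj (ψ w) * (1 - conj w * φ z) ^ ((sR : ℝ) : ℂ)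
        = conj w ^ n * ψ z * (1 - z * conj (φ w)) ^ ((sR : ℝ) : ℂ) := by
    intro z hz w hw
    have h := heq z hz w hw
    simp only [hsC] at h
    have d1 : (1 - z * conj (φ w)) ^ ((sR : ℝ) : ℂ) ≠ 0 :=
      cpow_ne_zero' (rhp_ne (hre1 z hz w hw))
    have d2 : (1 - conj w * φ z) ^ ((sR : ℝ) : ℂ) ≠ 0 :=
      cpow_ne_zero' (rhp_ne (hre2 z hz w hw))
    rw [div_eq_div_iff d1 d2] at h
    apply mul_left_cancel₀ hpne
    linear_combination h
  have hhB : ((1/2 : ℝ) : ℂ) ∈ Metric.ball (0 : ℂ) 1 := by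
    rw [mem_B, Complex.norm_real, Real.norm_eq_abs, abs_of_pos] <;> norm_num
  have hh0 : ((1/2 : ℝ) : ℂ) ≠ 0 := by norm_num
  have hn0 : n ≠ 0 := by omega
  have hψ0 : ψ 0 = 0 := by
    have h := star 0 h0B _ hhB
    rw [Complex.conj_ofReal] at h
    simp only [zero_pow hn0, zero_mul, mul_zero, sub_zero, Complex.one_cpow, mul_one] at h
    rcases mul_eq_zero.mp h.symm with h1 | h1
    · exact absurd h1 (pow_ne_zero n hh0)
    · exact h1
  have hw₀0 : w₀ ≠ 0 := fun h => hψw₀ (by rw [h, hψ0])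
  have hφcont : ∀ x ∈ Metric.ball (0 : ℂ) 1, ContinuousAt φ x := fun x hx =>
    hφ.continuousOn.continuousAt (Metric.isOpen_ball.mem_nhds hx)
  have contφR : ContinuousAt (fun t : ℝ => φ ((t : ℝ) : ℂ)) 0 := by
    have h1 : ContinuousAt φ (((0 : ℝ) : ℂ)) := by simpa using hφcont 0 h0B
    exact h1.comp Complex.continuous_ofReal.continuousAt
  have contcφR : ContinuousAt (fun t : ℝ => conj (φ ((t : ℝ) : ℂ))) 0 :=
    Complex.continuous_conj.continuousAt.comp contφR
  have evIoo : Set.Ioo (0 : ℝ) 1 ∈ 𝓝[>] (0 : ℝ) := Ioo_mem_nhdsGT_of_mem ⟨le_refl 0, one_pos⟩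
  have htB : ∀ t ∈ Set.Ioo (0 : ℝ) 1, ((t : ℝ) : ℂ) ∈ Metric.ball (0 : ℂ) 1 := by
    intro t ht; rw [mem_B, Complex.norm_real, Real.norm_eq_abs, abs_of_pos ht.1]; exact ht.2
  have ht0 : ∀ t ∈ Set.Ioo (0 : ℝ) 1, ((t : ℝ) : ℂ) ≠ 0 := by
    intro t ht; exact_mod_cast ht.1.ne'
  have hψkey : ∀ z ∈ Metric.ball (0 : ℂ) 1,
      ψ z * (1 - z * conj (φ 0)) ^ ((sR : ℝ) : ℂ) * w₀ ^ n
        = z ^ n * (ψ w₀ * (1 - w₀ * conj (φ 0)) ^ ((sR : ℝ) : ℂ)) := by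
    intro z hz
    have key : ∀ t ∈ Set.Ioo (0 : ℝ) 1,
        ψ z * (1 - z * conj (φ ((t : ℝ) : ℂ))) ^ ((sR : ℝ) : ℂ)
            * (w₀ ^ n * (1 - ((t : ℝ) : ℂ) * φ w₀) ^ ((sR : ℝ) : ℂ))
          = z ^ n * (ψ w₀ * (1 - w₀ * conj (φ ((t : ℝ) : ℂ))) ^ ((sR : ℝ) : ℂ))
            * (1 - ((t : ℝ) : ℂ) * φ z) ^ ((sR : ℝ) : ℂ) := by
      intro t ht
      have s1 := star z hz _ (htB t ht)
      have s2 := star w₀ hw₀B _ (htB t ht)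
      rw [Complex.conj_ofReal] at s1 s2
      apply mul_left_cancel₀ (pow_ne_zero n (ht0 t ht))
      linear_combination (-(w₀ ^ n * (1 - ((t : ℝ) : ℂ) * φ w₀) ^ ((sR : ℝ) : ℂ))) * s1
        + (z ^ n * (1 - ((t : ℝ) : ℂ) * φ z) ^ ((sR : ℝ) : ℂ)) * s2
    have c1 : ContinuousAt (fun t : ℝ =>
        ψ z * (1 - z * conj (φ ((t : ℝ) : ℂ))) ^ ((sR : ℝ) : ℂ)
          * (w₀ ^ n * (1 - ((t : ℝ) : ℂ) * φ w₀) ^ ((sR : ℝ) : ℂ))) 0 := by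
      apply ContinuousAt.mul
      · apply ContinuousAt.mul continuousAt_const
        apply contA_cpow (continuousAt_const.sub (continuousAt_const.mul contcφR))
        simpa using hre1 z hz 0 h0B
      · apply ContinuousAt.mul continuousAt_const
        apply contA_cpow (continuousAt_const.sub
          (Complex.continuous_ofReal.continuousAt.mul continuousAt_const))
        simp
    have c2 : ContinuousAt (fun t : ℝ =>
        z ^ n * (ψ w₀ * (1 - w₀ * conj (φ ((t : ℝ) : ℂ))) ^ ((sR : ℝ) : ℂ))
          * (1 - ((t : ℝ) : ℂ) * φ z) ^ ((sR : ℝ) : ℂ)) 0 := by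
      apply ContinuousAt.mul
      · apply ContinuousAt.mul continuousAt_const
        apply ContinuousAt.mul continuousAt_const
        apply contA_cpow (continuousAt_const.sub (continuousAt_const.mul contcφR))
        simpa using hre1 w₀ hw₀B 0 h0B
      · apply contA_cpow (continuousAt_const.sub
          (Complex.continuous_ofReal.continuousAt.mul continuousAt_const))
        simp
    have t1 : Tendsto (fun t : ℝ =>
        ψ z * (1 - z * conj (φ ((t : ℝ) : ℂ))) ^ ((sR : ℝ) : ℂ)
          * (w₀ ^ n * (1 - ((t : ℝ) : ℂ) * φ w₀) ^ ((sR : ℝ) : ℂ))) (𝓝[>] (0 : ℝ))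
        (𝓝 (ψ z * (1 - z * conj (φ 0)) ^ ((sR : ℝ) : ℂ) * w₀ ^ n)) := by
      have h := c1.tendsto.mono_left (nhdsWithin_le_nhds : 𝓝[>] (0 : ℝ) ≤ 𝓝 0)
      simpa only [Complex.ofReal_zero, zero_mul, sub_zero, Complex.one_cpow, mul_one] using h
    have t2 : Tendsto (fun t : ℝ =>
        z ^ n * (ψ w₀ * (1 - w₀ * conj (φ ((t : ℝ) : ℂ))) ^ ((sR : ℝ) : ℂ))
          * (1 - ((t : ℝ) : ℂ) * φ z) ^ ((sR : ℝ) : ℂ)) (𝓝[>] (0 : ℝ))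
        (𝓝 (z ^ n * (ψ w₀ * (1 - w₀ * conj (φ 0)) ^ ((sR : ℝ) : ℂ)))) := by
      have h := c2.tendsto.mono_left (nhdsWithin_le_nhds : 𝓝[>] (0 : ℝ) ≤ 𝓝 0)
      simpa only [Complex.ofReal_zero, zero_mul, sub_zero, Complex.one_cpow, mul_one] using h
    have hev : (fun t : ℝ =>
        ψ z * (1 - z * conj (φ ((t : ℝ) : ℂ))) ^ ((sR : ℝ) : ℂ)
          * (w₀ ^ n * (1 - ((t : ℝ) : ℂ) * φ w₀) ^ ((sR : ℝ) : ℂ)))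
        =ᶠ[𝓝[>] (0 : ℝ)] (fun t : ℝ =>
        z ^ n * (ψ w₀ * (1 - w₀ * conj (φ ((t : ℝ) : ℂ))) ^ ((sR : ℝ) : ℂ))
          * (1 - ((t : ℝ) : ℂ) * φ z) ^ ((sR : ℝ) : ℂ)) := by
      filter_upwards [evIoo] with t ht
      exact key t ht
    exact tendsto_nhds_unique (t1.congr' hev) t2
  have hG0ne : ψ w₀ * (1 - w₀ * conj (φ 0)) ^ ((sR : ℝ) : ℂ) ≠ 0 :=
    mul_ne_zero hψw₀ (cpow_ne_zero' (rhp_ne (hre1 w₀ hw₀B 0 h0B)))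
  have hGreal : ψ w₀ * (1 - w₀ * conj (φ 0)) ^ ((sR : ℝ) : ℂ) * conj w₀ ^ n
      = conj (ψ w₀) * (1 - conj w₀ * φ 0) ^ ((sR : ℝ) : ℂ) * w₀ ^ n := by
    have him : ∀ t ∈ Set.Ioo (0 : ℝ) 1,
        (conj (ψ w₀) * (1 - conj w₀ * φ 0) ^ ((sR : ℝ) : ℂ) * w₀ ^ n *
          ((1 - ((t : ℝ) : ℂ) * φ ((t : ℝ) : ℂ)) ^ ((sR : ℝ) : ℂ)
            * (1 - ((t : ℝ) : ℂ) * conj (φ 0)) ^ ((sR : ℝ) : ℂ))).im = 0 := by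
      intro t ht
      have htB' := htB t ht
      have hret : 0 < (1 - ((t : ℝ) : ℂ) * φ ((t : ℝ) : ℂ)).re :=
        rhp_re (habs _ htB') (hφabs _ htB')
      have s3 := star _ htB' _ htB'
      rw [Complex.conj_ofReal] at s3
      have s3' : conj (ψ ((t : ℝ) : ℂ)) * (1 - ((t : ℝ) : ℂ) * φ ((t : ℝ) : ℂ)) ^ ((sR : ℝ) : ℂ)
          = ψ ((t : ℝ) : ℂ) * (1 - ((t : ℝ) : ℂ) * conj (φ ((t : ℝ) : ℂ))) ^ ((sR : ℝ) : ℂ) := by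
        apply mul_left_cancel₀ (pow_ne_zero n (ht0 t ht))
        linear_combination s3
      have k1 := hψkey _ htB'
      have k2 := congrArg conj k1
      simp only [map_mul, map_pow, conj_cpow_real (hre1 _ htB' 0 h0B),
        conj_cpow_real (hre1 w₀ hw₀B 0 h0B), map_sub, map_one,
        Complex.conj_conj, Complex.conj_ofReal] at k2
      rw [← Complex.conj_eq_iff_im]
      have hconjr : conj (conj (ψ w₀) * (1 - conj w₀ * φ 0) ^ ((sR : ℝ) : ℂ) * w₀ ^ n *
          ((1 - ((t : ℝ) : ℂ) * φ ((t : ℝ) : ℂ)) ^ ((sR : ℝ) : ℂ)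
            * (1 - ((t : ℝ) : ℂ) * conj (φ 0)) ^ ((sR : ℝ) : ℂ)))
          = ψ w₀ * (1 - w₀ * conj (φ 0)) ^ ((sR : ℝ) : ℂ) * conj w₀ ^ n *
            ((1 - ((t : ℝ) : ℂ) * conj (φ ((t : ℝ) : ℂ))) ^ ((sR : ℝ) : ℂ)
              * (1 - ((t : ℝ) : ℂ) * φ 0) ^ ((sR : ℝ) : ℂ)) := by
        simp only [map_mul, map_pow, conj_cpow_real hret,
          conj_cpow_real (hre1 _ htB' 0 h0B), conj_cpow_real (hre2 0 h0B w₀ hw₀B),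
          map_sub, map_one, Complex.conj_conj, Complex.conj_ofReal]
      rw [hconjr]
      apply mul_left_cancel₀ (pow_ne_zero n (ht0 t ht))
      linear_combination
        (-(w₀ ^ n * conj w₀ ^ n * (1 - ((t : ℝ) : ℂ) * conj (φ 0)) ^ ((sR : ℝ) : ℂ)
          * (1 - ((t : ℝ) : ℂ) * φ 0) ^ ((sR : ℝ) : ℂ))) * s3'
        + (w₀ ^ n * (1 - ((t : ℝ) : ℂ) * φ ((t : ℝ) : ℂ)) ^ ((sR : ℝ) : ℂ)
          * (1 - ((t : ℝ) : ℂ) * conj (φ 0)) ^ ((sR : ℝ) : ℂ)) * k2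
        - (conj w₀ ^ n * (1 - ((t : ℝ) : ℂ) * conj (φ ((t : ℝ) : ℂ))) ^ ((sR : ℝ) : ℂ)
          * (1 - ((t : ℝ) : ℂ) * φ 0) ^ ((sR : ℝ) : ℂ)) * k1
    have cim : ContinuousAt (fun t : ℝ =>
        (conj (ψ w₀) * (1 - conj w₀ * φ 0) ^ ((sR : ℝ) : ℂ) * w₀ ^ n *
          ((1 - ((t : ℝ) : ℂ) * φ ((t : ℝ) : ℂ)) ^ ((sR : ℝ) : ℂ)
            * (1 - ((t : ℝ) : ℂ) * conj (φ 0)) ^ ((sR : ℝ) : ℂ))).im) 0 := by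
      apply Complex.continuous_im.continuousAt.comp
      apply ContinuousAt.mul continuousAt_const
      apply ContinuousAt.mul
      · apply contA_cpow (continuousAt_const.sub
          (Complex.continuous_ofReal.continuousAt.mul contφR))
        simp
      · apply contA_cpow (continuousAt_const.sub
          (Complex.continuous_ofReal.continuousAt.mul continuousAt_const))
        simp
    have h1 := cim.tendsto.mono_left (nhdsWithin_le_nhds : 𝓝[>] (0 : ℝ) ≤ 𝓝 0)
    simp only [Complex.ofReal_zero, zero_mul, sub_zero, Complex.one_cpow, mul_one] at h1
    have hev0 : (fun t : ℝ =>
        (conj (ψ w₀) * (1 - conj w₀ * φ 0) ^ ((sR : ℝ) : ℂ) * w₀ ^ n *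
          ((1 - ((t : ℝ) : ℂ) * φ ((t : ℝ) : ℂ)) ^ ((sR : ℝ) : ℂ)
            * (1 - ((t : ℝ) : ℂ) * conj (φ 0)) ^ ((sR : ℝ) : ℂ))).im)
        =ᶠ[𝓝[>] (0 : ℝ)] (fun _ => (0 : ℝ)) := by
      filter_upwards [evIoo] with t ht
      exact him t ht
    have hval := tendsto_nhds_unique (h1.congr' hev0) tendsto_const_nhds
    have hc := Complex.conj_eq_iff_im.mpr hval
    simp only [map_mul, map_pow, conj_cpow_real (hre2 0 h0B w₀ hw₀B),
      map_sub, map_one, Complex.conj_conj] at hc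
    linear_combination hc
  have dd : ∀ z ∈ Metric.ball (0 : ℂ) 1, z ≠ 0 → ∀ w ∈ Metric.ball (0 : ℂ) 1, w ≠ 0 →
      (1 - conj w * φ z) ^ ((sR : ℝ) : ℂ) * (1 - z * conj (φ 0)) ^ ((sR : ℝ) : ℂ)
        = (1 - z * conj (φ w)) ^ ((sR : ℝ) : ℂ) * (1 - conj w * φ 0) ^ ((sR : ℝ) : ℂ) := by
    intro z hz hz0 w hw hw0
    have r1 := star z hz w hw
    have r2 := hψkey z hz
    have r3 := congrArg conj (hψkey w hw)
    simp only [map_mul, map_pow, conj_cpow_real (hre1 w hw 0 h0B),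
      conj_cpow_real (hre1 w₀ hw₀B 0 h0B), map_sub, map_one,
      Complex.conj_conj] at r3
    have r4 := hGreal
    have hcne : conj (ψ w₀) * (1 - conj w₀ * φ 0) ^ ((sR : ℝ) : ℂ) ≠ 0 :=
      mul_ne_zero (by simpa using hψw₀) (cpow_ne_zero' (rhp_ne (hre2 0 h0B w₀ hw₀B)))
    have hM : conj (ψ w₀) * (1 - conj w₀ * φ 0) ^ ((sR : ℝ) : ℂ) * z ^ n * conj w ^ n * w₀ ^ n ≠ 0 := by
      apply mul_ne_zero
      apply mul_ne_zero
      apply mul_ne_zero hcne (pow_ne_zero n hz0)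
      · exact pow_ne_zero n (by simpa using hw0)
      · exact pow_ne_zero n hw₀0
    apply mul_left_cancel₀ hM
    linear_combination
      (w₀ ^ n * (1 - z * conj (φ 0)) ^ ((sR : ℝ) : ℂ) * (1 - conj w * φ 0) ^ ((sR : ℝ) : ℂ)
        * conj w₀ ^ n) * r1
      - (z ^ n * w₀ ^ n * (1 - conj w * φ z) ^ ((sR : ℝ) : ℂ)
        * (1 - z * conj (φ 0)) ^ ((sR : ℝ) : ℂ)) * r3
      + (conj w ^ n * (1 - z * conj (φ w)) ^ ((sR : ℝ) : ℂ) * (1 - conj w * φ 0) ^ ((sR : ℝ) : ℂ)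
        * conj w₀ ^ n) * r2
      + (z ^ n * conj w ^ n * (1 - z * conj (φ w)) ^ ((sR : ℝ) : ℂ)
        * (1 - conj w * φ 0) ^ ((sR : ℝ) : ℂ)) * r4
  have hesne : ((sR : ℝ) : ℂ) ≠ 0 := by
    rw [Complex.ofReal_ne_zero]; intro h; rw [h] at hsR1; linarith
  set SS : Set (ℂ × ℂ) := (Metric.ball (0 : ℂ) 1 \ {0}) ×ˢ (Metric.ball (0 : ℂ) 1 \ {0})
    with hSSdef
  have hSSpre : IsPreconnected SS := preconn_pball.prod preconn_pball
  set F : ℂ × ℂ → ℂ := fun q =>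
    (Complex.log (1 - conj q.2 * φ q.1) * ((sR : ℝ) : ℂ)
      + Complex.log (1 - q.1 * conj (φ 0)) * ((sR : ℝ) : ℂ))
    - (Complex.log (1 - q.1 * conj (φ q.2)) * ((sR : ℝ) : ℂ)
      + Complex.log (1 - conj q.2 * φ 0) * ((sR : ℝ) : ℂ)) with hFdef
  have hFcontAt : ∀ q : ℂ × ℂ, q.1 ∈ Metric.ball (0 : ℂ) 1 → q.2 ∈ Metric.ball (0 : ℂ) 1 →
      ContinuousAt F q := by
    intro q hq1 hq2
    have hφ1 : ContinuousAt (fun q : ℂ × ℂ => φ q.1) q :=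
      (hφcont q.1 hq1).comp continuous_fst.continuousAt
    have hφ2 : ContinuousAt (fun q : ℂ × ℂ => conj (φ q.2)) q :=
      Complex.continuous_conj.continuousAt.comp
        ((hφcont q.2 hq2).comp continuous_snd.continuousAt)
    have hb1 : ContinuousAt (fun q : ℂ × ℂ => 1 - conj q.2 * φ q.1) q :=
      continuousAt_const.sub
        ((Complex.continuous_conj.continuousAt.comp continuous_snd.continuousAt).mul hφ1)
    have hb2 : ContinuousAt (fun q : ℂ × ℂ => 1 - q.1 * conj (φ 0)) q :=
      continuousAt_const.sub (continuous_fst.continuousAt.mul continuousAt_const)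
    have hb3 : ContinuousAt (fun q : ℂ × ℂ => 1 - q.1 * conj (φ q.2)) q :=
      continuousAt_const.sub (continuous_fst.continuousAt.mul hφ2)
    have hb4 : ContinuousAt (fun q : ℂ × ℂ => 1 - conj q.2 * φ 0) q :=
      continuousAt_const.sub
        ((Complex.continuous_conj.continuousAt.comp continuous_snd.continuousAt).mul
          continuousAt_const)
    rw [hFdef]
    apply ContinuousAt.sub
    · exact ((hb1.clog (rhp_slit (hre2 q.1 hq1 q.2 hq2))).mul continuousAt_const).add
        ((hb2.clog (rhp_slit (hre1 q.1 hq1 0 h0B))).mul continuousAt_const)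
    · exact ((hb3.clog (rhp_slit (hre1 q.1 hq1 q.2 hq2))).mul continuousAt_const).add
        ((hb4.clog (rhp_slit (hre2 0 h0B q.2 hq2))).mul continuousAt_const)
  have hFexp : ∀ q ∈ SS, Complex.exp (F q) = 1 := by
    rintro ⟨z, w⟩ hq
    obtain ⟨⟨hz, hz0⟩, hw, hw0⟩ := hq
    have hz0' : z ≠ 0 := by simpa using hz0
    have hw0' : w ≠ 0 := by simpa using hw0
    have n1 : (1 - conj w * φ z) ≠ 0 := rhp_ne (hre2 z hz w hw)
    have n2 : (1 - z * conj (φ 0)) ≠ 0 := rhp_ne (hre1 z hz 0 h0B)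
    have n3 : (1 - z * conj (φ w)) ≠ 0 := rhp_ne (hre1 z hz w hw)
    have n4 : (1 - conj w * φ 0) ≠ 0 := rhp_ne (hre2 0 h0B w hw)
    rw [hFdef]
    simp only
    rw [Complex.exp_sub, Complex.exp_add, Complex.exp_add,
      ← Complex.cpow_def_of_ne_zero n1, ← Complex.cpow_def_of_ne_zero n2,
      ← Complex.cpow_def_of_ne_zero n3, ← Complex.cpow_def_of_ne_zero n4]
    rw [dd z hz hz0' w hw hw0']
    exact div_self (mul_ne_zero (cpow_ne_zero' n3) (cpow_ne_zero' n4))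
  have hhSS : ((((1:ℝ)/2 : ℝ) : ℂ), (((1:ℝ)/2 : ℝ) : ℂ)) ∈ SS := by
    constructor
    · exact ⟨by simpa using hhB, by simpa using hh0⟩
    · exact ⟨by simpa using hhB, by simpa using hh0⟩
  have hFcontOn : ContinuousOn F SS := by
    rintro ⟨z, w⟩ hq
    exact (hFcontAt (z, w) hq.1.1 hq.2.1).continuousWithinAt
  have hconst : ∀ q ∈ SS, F q = F ((((1:ℝ)/2 : ℝ) : ℂ), (((1:ℝ)/2 : ℝ) : ℂ)) :=
    fun q hq => strip hSSpre hFcontOn hFexp hhSS hq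
  have hF00 : F ((0 : ℂ), (0 : ℂ)) = 0 := by
    rw [hFdef]
    simp [Complex.log_one]
  have hθ0 : F ((((1:ℝ)/2 : ℝ) : ℂ), (((1:ℝ)/2 : ℝ) : ℂ)) = 0 := by
    have hdiagcont : ContinuousAt (fun t : ℝ => F (((t : ℝ) : ℂ), ((t : ℝ) : ℂ))) 0 := by
      have h00 : ContinuousAt F ((((0:ℝ) : ℝ) : ℂ), (((0:ℝ) : ℝ) : ℂ)) := by
        simpa using hFcontAt ((0 : ℂ), (0 : ℂ)) h0B h0B
      have hg : ContinuousAt (fun t : ℝ => ((((t : ℝ) : ℝ) : ℂ), (((t : ℝ) : ℝ) : ℂ))) 0 :=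
        Complex.continuous_ofReal.continuousAt.prodMk Complex.continuous_ofReal.continuousAt
      exact ContinuousAt.comp (f := fun t : ℝ => ((((t : ℝ) : ℝ) : ℂ), (((t : ℝ) : ℝ) : ℂ))) h00 hg
    have h1 := hdiagcont.tendsto.mono_left (nhdsWithin_le_nhds : 𝓝[>] (0 : ℝ) ≤ 𝓝 0)
    rw [show ((((0:ℝ) : ℝ) : ℂ), (((0:ℝ) : ℝ) : ℂ)) = ((0 : ℂ), (0 : ℂ)) by norm_num] at h1
    rw [hF00] at h1
    have hev : (fun t : ℝ => F (((t : ℝ) : ℂ), ((t : ℝ) : ℂ)))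
        =ᶠ[𝓝[>] (0 : ℝ)] (fun _ => F ((((1:ℝ)/2 : ℝ) : ℂ), (((1:ℝ)/2 : ℝ) : ℂ))) := by
      filter_upwards [evIoo] with t ht
      exact hconst _ ⟨⟨htB t ht, by simpa using ht0 t ht⟩, ⟨htB t ht, by simpa using ht0 t ht⟩⟩
    exact (tendsto_nhds_unique (h1.congr' hev) tendsto_const_nhds).symm
  have hE : ∀ z ∈ Metric.ball (0 : ℂ) 1, z ≠ 0 → ∀ w ∈ Metric.ball (0 : ℂ) 1, w ≠ 0 →
      (1 - conj w * φ z) * (1 - z * conj (φ 0))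
        = (1 - z * conj (φ w)) * (1 - conj w * φ 0) := by
    intro z hz hz0 w hw hw0
    have n1 : (1 - conj w * φ z) ≠ 0 := rhp_ne (hre2 z hz w hw)
    have n2 : (1 - z * conj (φ 0)) ≠ 0 := rhp_ne (hre1 z hz 0 h0B)
    have n3 : (1 - z * conj (φ w)) ≠ 0 := rhp_ne (hre1 z hz w hw)
    have n4 : (1 - conj w * φ 0) ≠ 0 := rhp_ne (hre2 0 h0B w hw)
    have hq : (z, w) ∈ SS := ⟨⟨hz, by simpa using hz0⟩, ⟨hw, by simpa using hw0⟩⟩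
    have h0 : F (z, w) = 0 := (hconst _ hq).trans hθ0
    rw [hFdef] at h0
    simp only at h0
    have hfac : (Complex.log (1 - conj w * φ z) + Complex.log (1 - z * conj (φ 0))
        - (Complex.log (1 - z * conj (φ w)) + Complex.log (1 - conj w * φ 0)))
        * ((sR : ℝ) : ℂ) = 0 := by
      linear_combination h0
    have hsum : Complex.log (1 - conj w * φ z) + Complex.log (1 - z * conj (φ 0))
        = Complex.log (1 - z * conj (φ w)) + Complex.log (1 - conj w * φ 0) := by
      rcases mul_eq_zero.mp hfac with h | h
      · exact sub_eq_zero.mp h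
      · exact absurd h hesne
    have hexp := congrArg Complex.exp hsum
    rw [Complex.exp_add, Complex.exp_add, Complex.exp_log n1, Complex.exp_log n2,
      Complex.exp_log n3, Complex.exp_log n4] at hexp
    exact hexp
  have hhval : ((1/2 : ℝ) : ℂ) = (1/2 : ℂ) := by norm_num
  have hhB2 : (1/2 : ℂ) ∈ Metric.ball (0 : ℂ) 1 := hhval ▸ hhB
  have hh02 : (1/2 : ℂ) ≠ 0 := by norm_num
  have hconjhalf : conj ((1/2 : ℂ)) = (1/2 : ℂ) := by
    rw [← hhval, Complex.conj_ofReal]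
  set c' : ℂ := 2 * ((1 - (1/2 : ℂ) * conj (φ 0)) * (φ (1/2 : ℂ) - φ 0)) with hc'def
  have hφw : ∀ w ∈ Metric.ball (0 : ℂ) 1, w ≠ 0 →
      conj (φ w) * (1 - φ 0 * conj w)
        = conj (φ 0) * (1 - φ 0 * conj w) + c' * conj w := by
    intro w hw hw0
    have e := hE (1/2 : ℂ) hhB2 hh02 w hw hw0
    linear_combination 2 * e - conj w * hc'def
  have f1 := hφw (1/2 : ℂ) hhB2 hh02
  rw [hconjhalf] at f1
  have f2 := congrArg conj f1
  simp only [map_add, map_mul, map_sub, map_one, Complex.conj_conj, hconjhalf] at f2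
  have e2 := hE (1/2 : ℂ) hhB2 hh02 (1/2 : ℂ) hhB2 hh02
  simp only [hconjhalf] at e2
  have hcreal : conj c' = c' := by
    linear_combination (-4 : ℂ) * e2 - 2 * f2 + 2 * f1
  have hcre : ((c'.re : ℝ) : ℂ) = c' := Complex.conj_eq_iff_re.mp hcreal
  -- the coefficient for ψ
  have hw₀n : w₀ ^ n ≠ 0 := pow_ne_zero n hw₀0
  have hcw₀n : conj w₀ ^ n ≠ 0 := pow_ne_zero n (by simpa using hw₀0)
  have hg0conj : conj (ψ w₀ * (1 - w₀ * conj (φ 0)) ^ ((sR : ℝ) : ℂ) / w₀ ^ n)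
      = ψ w₀ * (1 - w₀ * conj (φ 0)) ^ ((sR : ℝ) : ℂ) / w₀ ^ n := by
    rw [map_div₀, div_eq_div_iff (by simpa [map_pow] using hcw₀n) hw₀n]
    simp only [map_mul, map_pow, conj_cpow_real (hre1 w₀ hw₀B 0 h0B), map_sub, map_one,
      Complex.conj_conj]
    linear_combination (-1 : ℂ) * hGreal
  have hg0re : (((ψ w₀ * (1 - w₀ * conj (φ 0)) ^ ((sR : ℝ) : ℂ) / w₀ ^ n).re : ℝ) : ℂ)
      = ψ w₀ * (1 - w₀ * conj (φ 0)) ^ ((sR : ℝ) : ℂ) / w₀ ^ n :=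
    Complex.conj_eq_iff_re.mp hg0conj
  refine ⟨(ψ w₀ * (1 - w₀ * conj (φ 0)) ^ ((sR : ℝ) : ℂ) / w₀ ^ n).re, c'.re, ?_⟩
  intro z hz
  constructor
  · rw [hsC, hg0re]
    have hcomm : (1 - conj (φ 0) * z) = (1 - z * conj (φ 0)) := by ring
    rw [hcomm, eq_div_iff (cpow_ne_zero' (rhp_ne (hre1 z hz 0 h0B))), eq_comm,
      div_mul_eq_mul_div, div_eq_iff hw₀n]
    linear_combination (-1 : ℂ) * hψkey z hz
  · by_cases hz0 : z = 0
    · subst hz0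
      simp
    · have hφz := congrArg conj (hφw z hz hz0)
      simp only [map_add, map_mul, map_sub, map_one, Complex.conj_conj] at hφz
      rw [hcreal] at hφz
      have hden : (1 - conj (φ 0) * z) ≠ 0 := by
        have h := rhp_ne (hre1 z hz 0 h0B)
        intro hcontra
        apply h
        linear_combination hcontra
      rw [hcre]
      rw [← sub_eq_iff_eq_add', eq_div_iff hden]
      linear_combination hφz
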